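/- In the two-sided bipartite market with symmetric utilities given by: u_{1,4}=w_{4,1}=1, u_{2,4}=w_{4,2}=2, u_{2,5}=w_{5,2}=1, u_{2,6}=w_{6,2}=1, and all other utilities 0, no fractional perfect matching is simultaneously envy-free and Pareto-optimal. -/

import Mathlib

def isPM {n : ℕ} (x : Fin n → Fin n → ℝ) : Prop :=
  (∀ i j, 0 ≤ x i j) ∧ (∀ i, ∑ j, x i j = 1) ∧ (∀ j, ∑ i, x i j = 1)

/-- Utility of agent `i ∈ A` in a two-sided market: `u i · x i`. -/
def utilA {n : ℕ} (u x : Fin n → Fin n → ℝ) (i : Fin n) : ℝ := ∑ j, u i j * x i j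

/-- Utility of agent `j ∈ B`: `w j · x_j = Σ_i w j i * x i j`. -/
def utilB {n : ℕ} (w : Fin n → Fin n → ℝ) (x : Fin n → Fin n → ℝ) (j : Fin n) : ℝ :=
  ∑ i, w j i * x i j

/-- Two-sided envy-freeness: no agent on either side prefers the bundle of another
agent on their own side. -/
def EnvyFree2 {n : ℕ} (u w x : Fin n → Fin n → ℝ) : Prop :=
  (∀ i i' : Fin n, ∑ j, u i j * x i' j ≤ utilA u x i) ∧
  (∀ j j' : Fin n, ∑ i, w j i * x i j' ≤ utilB w x j)

/-- Two-sided Pareto-optimality over fractional perfect matchings. -/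
def ParetoOptimal2 {n : ℕ} (u w x : Fin n → Fin n → ℝ) : Prop :=
  ¬ ∃ y, isPM y ∧
    (∀ i, utilA u x i ≤ utilA u y i) ∧ (∀ j, utilB w x j ≤ utilB w y j) ∧
    ((∃ i, utilA u x i < utilA u y i) ∨ (∃ j, utilB w x j < utilB w y j))

/-- Symmetric utilities (A = {1,2,3} ↦ {0,1,2}, B = {4,5,6} ↦ {0,1,2}):
u_{1,4} = 1, u_{2,4} = 2, u_{2,5} = u_{2,6} = 1, all other utilities 0. -/
def u14 : Fin 3 → Fin 3 → ℝ := ![![1, 0, 0], ![2, 1, 1], ![0, 0, 0]]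

/-- Side B's utilities are symmetric: w j i = u i j. -/
def w14 : Fin 3 → Fin 3 → ℝ := fun j i => u14 i j

lemma fin3_forall {P : Fin 3 → Prop} (h0 : P 0) (h1 : P 1) (h2 : P 2) : ∀ i, P i := by
  intro i; fin_cases i <;> assumption

/-- in this symmetric two-sided {0,1,2} instance, no fractional
perfect matching is simultaneously envy-free and Pareto-optimal. -/
theorem no_efpo_symmetric :
    ¬ ∃ x : Fin 3 → Fin 3 → ℝ, isPM x ∧ EnvyFree2 u14 w14 x ∧ ParetoOptimal2 u14 w14 x := by
  rintro ⟨x, ⟨hpos, hrow, hcol⟩, ⟨efA, efB⟩, po⟩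
  have r0 := hrow 0
  have r1 := hrow 1
  have c0 := hcol 0
  have e01 := efA 0 1
  have e02 := efA 0 2
  have e10 := efA 1 0
  have b10 := efB 1 0
  have b12 := efB 1 2
  have b21 := efB 2 1
  simp only [utilA, utilB, u14, w14, Fin.sum_univ_three, Matrix.cons_val_zero,
    Matrix.cons_val_one, Matrix.head_cons, Matrix.cons_val_two,
    Matrix.tail_cons] at r0 r1 c0 e01 e02 e10 b10 b12 b21
  have h00 : x 0 0 = 1/3 := by linarith
  have h10 : x 1 0 = 1/3 := by linarith
  have h11 : x 1 1 = 1/3 := by linarith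
  have h12 : x 1 2 = 1/3 := by linarith
  apply po
  refine ⟨![![2/3, 1/6, 1/6], ![1/3, 1/3, 1/3], ![0, 1/2, 1/2]], ⟨?_, ?_, ?_⟩, ?_, ?_, ?_⟩
  · exact fin3_forall (fin3_forall (by norm_num [Matrix.cons_val_two]) (by norm_num [Matrix.cons_val_two]) (by norm_num [Matrix.cons_val_two]))
      (fin3_forall (by norm_num [Matrix.cons_val_two]) (by norm_num [Matrix.cons_val_two]) (by norm_num [Matrix.cons_val_two]))
      (fin3_forall (by norm_num [Matrix.cons_val_two]) (by norm_num [Matrix.cons_val_two]) (by norm_num [Matrix.cons_val_two]))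
  · exact fin3_forall (by norm_num [Fin.sum_univ_three, Matrix.cons_val_two]) (by norm_num [Fin.sum_univ_three, Matrix.cons_val_two])
      (by norm_num [Fin.sum_univ_three, Matrix.cons_val_two])
  · exact fin3_forall (by norm_num [Fin.sum_univ_three, Matrix.cons_val_two]) (by norm_num [Fin.sum_univ_three, Matrix.cons_val_two])
      (by norm_num [Fin.sum_univ_three, Matrix.cons_val_two])
  · refine fin3_forall ?_ ?_ ?_ <;>
      simp only [utilA, u14, Fin.sum_univ_three, Matrix.cons_val_zero,
        Matrix.cons_val_one, Matrix.head_cons, Matrix.cons_val_two, Matrix.tail_cons] <;>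
      norm_num <;> linarith
  · refine fin3_forall ?_ ?_ ?_ <;>
      simp only [utilB, u14, w14, Fin.sum_univ_three, Matrix.cons_val_zero,
        Matrix.cons_val_one, Matrix.head_cons, Matrix.cons_val_two, Matrix.tail_cons] <;>
      norm_num <;> linarith
  · left; refine ⟨0, ?_⟩
    simp only [utilA, u14, Fin.sum_univ_three, Matrix.cons_val_zero,
      Matrix.cons_val_one, Matrix.head_cons, Matrix.cons_val_two, Matrix.tail_cons]
    norm_num; linarith
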